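/- For μ > 0 and a nonnegative integer l₁, with l = 2l₁ + 1, one has ∫_ℂ e^{-μ|z|²} ∫₀^{2π} ∫₀^u {e^{is}z + e^{-is}z̄, (e^{iu}z + e^{-iu}z̄)^l} ds du dz dz̄ = -2π² l! / (l₁! μ^{l₁+1}), where {f,g} denotes the Poisson bracket, equal in complex coordinates to Im(∂f/∂z · ∂g/∂z̄), and dz dz̄ denotes Lebesgue measure on ℂ ≅ ℝ². -/

import Mathlib

open scoped Real

/-- The Wirtinger derivative `∂f/∂z = (1/2)(∂_x - i ∂_p) f` of `f : ℂ → ℂ`. -/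
noncomputable def wirtZ (f : ℂ → ℂ) (z : ℂ) : ℂ :=
  (1 / 2) * ((fderiv ℝ f z) 1 - Complex.I * (fderiv ℝ f z) Complex.I)

/-- The Wirtinger derivative `∂f/∂z̄ = (1/2)(∂_x + i ∂_p) f` of `f : ℂ → ℂ`. -/
noncomputable def wirtZbar (f : ℂ → ℂ) (z : ℂ) : ℂ :=
  (1 / 2) * ((fderiv ℝ f z) 1 + Complex.I * (fderiv ℝ f z) Complex.I)

/-- The Poisson bracket in complex coordinates, `{f,g} = Im(∂f/∂z · ∂g/∂z̄)`. -/
noncomputable def PB (f g : ℂ → ℂ) (z : ℂ) : ℝ :=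
  (wirtZ f z * wirtZbar g z).im

noncomputable def cLin (a b : ℂ) : ℂ →L[ℝ] ℂ :=
  a • (ContinuousLinearMap.id ℝ ℂ) + b • (Complex.conjCLE.toContinuousLinearMap)

lemma cLin_apply (a b w : ℂ) : cLin a b w = a * w + b * (starRingEnd ℂ) w := by
  simp [cLin]

lemma hasFDerivAt_cLin_pow (a b z : ℂ) (n : ℕ) :
    HasFDerivAt (fun w => (cLin a b w) ^ (n + 1))
      (((n + 1 : ℂ) * (cLin a b z) ^ n) • (cLin a b)) z := by
  induction n with
  | zero => simpa using (cLin a b).hasFDerivAt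
  | succ m ih =>
    have hL : HasFDerivAt (fun w => cLin a b w) (cLin a b) z := (cLin a b).hasFDerivAt
    have h := ih.mul hL
    convert h using 1
    · rfl
    · rfl
    · funext w; exact pow_succ _ _
    rw [smul_smul, ← add_smul]
    congr 1
    push_cast
    ring

lemma fderiv_lin (a b z : ℂ) :
    fderiv ℝ (fun w => a * w + b * (starRingEnd ℂ) w) z = cLin a b := by
  have : (fun w => a * w + b * (starRingEnd ℂ) w) = ⇑(cLin a b) := by
    funext w; rw [cLin_apply]
  rw [this, ContinuousLinearMap.fderiv]

lemma fderiv_lin_pow (a b z : ℂ) (n : ℕ) :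
    fderiv ℝ (fun w => (a * w + b * (starRingEnd ℂ) w) ^ (n + 1)) z
      = ((n + 1 : ℂ) * (a * z + b * (starRingEnd ℂ) z) ^ n) • (cLin a b) := by
  have : (fun w => (a * w + b * (starRingEnd ℂ) w) ^ (n + 1))
      = fun w => (cLin a b w) ^ (n + 1) := by
    funext w; rw [cLin_apply]
  rw [this, (hasFDerivAt_cLin_pow a b z n).fderiv, cLin_apply]

lemma wirtZ_lin (a b z : ℂ) : wirtZ (fun w => a * w + b * (starRingEnd ℂ) w) z = a := by
  unfold wirtZ
  rw [fderiv_lin, cLin_apply, cLin_apply]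
  simp only [map_one, Complex.conj_I, mul_one]
  linear_combination (-(a - b) / 2) * Complex.I_sq

lemma wirtZbar_lin_pow (a b z : ℂ) (n : ℕ) :
    wirtZbar (fun w => (a * w + b * (starRingEnd ℂ) w) ^ (n + 1)) z
      = (n + 1 : ℂ) * (a * z + b * (starRingEnd ℂ) z) ^ n * b := by
  unfold wirtZbar
  rw [fderiv_lin_pow]
  simp only [ContinuousLinearMap.coe_smul', Pi.smul_apply, cLin_apply, smul_eq_mul,
    map_one, Complex.conj_I, mul_one]
  linear_combination ((n + 1 : ℂ) * (a * z + b * (starRingEnd ℂ) z) ^ n * (a - b) / 2) *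
    Complex.I_sq

lemma conj_exp_mul (u : ℝ) (z : ℂ) :
    Complex.exp (-(Complex.I * u)) * (starRingEnd ℂ) z
      = (starRingEnd ℂ) (Complex.exp (Complex.I * u) * z) := by
  rw [map_mul, ← Complex.exp_conj]
  simp

lemma hreal (u : ℝ) (z : ℂ) :
    Complex.exp (Complex.I * u) * z + Complex.exp (-(Complex.I * u)) * (starRingEnd ℂ) z
      = ((2 * (Complex.exp (Complex.I * u) * z).re : ℝ) : ℂ) := by
  rw [conj_exp_mul, Complex.add_conj]

lemma ofReal_mul_exp_im (c t : ℝ) :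
    ((c : ℂ) * Complex.exp ((t : ℝ) * Complex.I)).im = c * Real.sin t := by
  simp [Complex.exp_ofReal_mul_I_im]

lemma PB_eval (l₁ : ℕ) (s u : ℝ) (z : ℂ) :
    PB (fun w => Complex.exp (Complex.I * s) * w
          + Complex.exp (-(Complex.I * s)) * (starRingEnd ℂ) w)
       (fun w => (Complex.exp (Complex.I * u) * w
          + Complex.exp (-(Complex.I * u)) * (starRingEnd ℂ) w) ^ (2 * l₁ + 1)) z
      = ((2 * l₁ + 1 : ℝ) * (2 * (Complex.exp (Complex.I * u) * z).re) ^ (2 * l₁))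
          * Real.sin (s - u) := by
  unfold PB
  rw [wirtZ_lin, wirtZbar_lin_pow, hreal]
  have this' : Complex.exp (Complex.I * s) *
        (((2 * l₁ : ℕ) + 1 : ℂ) * ((2 * (Complex.exp (Complex.I * u) * z).re : ℝ) : ℂ) ^ (2 * l₁)
          * Complex.exp (-(Complex.I * u)))
      = (((2 * l₁ + 1 : ℝ) * (2 * (Complex.exp (Complex.I * u) * z).re) ^ (2 * l₁) : ℝ) : ℂ)
          * Complex.exp (((s - u : ℝ) : ℂ) * Complex.I) := by
    rw [show ((s - u : ℝ) : ℂ) * Complex.I = Complex.I * s + -(Complex.I * u) by push_cast; ring,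
      Complex.exp_add]
    push_cast
    ring
  rw [this', ofReal_mul_exp_im]

lemma expInt (m : ℤ) :
    (∫ u in (0:ℝ)..(2 * Real.pi), Complex.exp ((m : ℂ) * (Complex.I * u)))
      = if m = 0 then (2 * Real.pi : ℂ) else 0 := by
  rcases eq_or_ne m 0 with hm | hm
  · simp [hm]
  · have hc : (m : ℂ) * Complex.I ≠ 0 := by
      simp [Complex.I_ne_zero, Int.cast_injective.ne_iff, hm]
    have h : ∀ u : ℝ, (m : ℂ) * (Complex.I * u) = ((m : ℂ) * Complex.I) * u := by
      intro u; ring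
    simp_rw [h]
    rw [integral_exp_mul_complex hc]
    simp only [if_neg hm]
    rw [show ((m : ℂ) * Complex.I) * ((2 : ℝ) * Real.pi : ℝ) = m * (2 * Real.pi * Complex.I) by
      push_cast; ring]
    rw [Complex.exp_int_mul_two_pi_mul_I]
    simp

lemma cosInt (m : ℤ) (h1 : m + 1 ≠ 0) (h2 : m - 1 ≠ 0) :
    (∫ u in (0:ℝ)..(2 * Real.pi),
        (Complex.cos u - 1) * Complex.exp ((m : ℂ) * (Complex.I * u)))
      = if m = 0 then (-(2 * Real.pi) : ℂ) else 0 := by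
  have key : ∀ u : ℝ, (Complex.cos u - 1) * Complex.exp ((m : ℂ) * (Complex.I * u))
      = (1 / 2) * Complex.exp (((m + 1 : ℤ) : ℂ) * (Complex.I * u))
        + (1 / 2) * Complex.exp (((m - 1 : ℤ) : ℂ) * (Complex.I * u))
        - Complex.exp ((m : ℂ) * (Complex.I * u)) := by
    intro u
    rw [Complex.cos]
    push_cast
    rw [show ((m : ℂ) + 1) * (Complex.I * u) = Complex.I * u + (m : ℂ) * (Complex.I * u) by ring,
      show ((m : ℂ) - 1) * (Complex.I * u) = -(Complex.I * u) + (m : ℂ) * (Complex.I * u) by ring,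
      Complex.exp_add, Complex.exp_add]
    rw [show (Complex.I * (u:ℂ)) = (u:ℂ) * Complex.I by ring]
    ring
  simp_rw [key]
  have i1 : ∀ (k : ℤ), IntervalIntegrable (fun u : ℝ => Complex.exp ((k : ℂ) * (Complex.I * u)))
      MeasureTheory.volume 0 (2 * Real.pi) := by
    intro k
    apply Continuous.intervalIntegrable
    fun_prop
  rw [intervalIntegral.integral_sub (((i1 (m+1)).const_mul _).add ((i1 (m-1)).const_mul _)) (i1 m),
    intervalIntegral.integral_add ((i1 (m+1)).const_mul _) ((i1 (m-1)).const_mul _),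
    intervalIntegral.integral_const_mul, intervalIntegral.integral_const_mul,
    expInt, expInt, expInt]
  rw [if_neg h1, if_neg h2]
  rcases eq_or_ne m 0 with hm | hm <;> simp [hm]

lemma angInt (l₁ : ℕ) (z : ℂ) :
    (∫ u in (0:ℝ)..(2 * Real.pi), (Complex.cos u - 1) *
        (Complex.exp (Complex.I * u) * z
          + Complex.exp (-(Complex.I * u)) * (starRingEnd ℂ) z) ^ (2 * l₁))
      = -(2 * Real.pi) * (((2 * l₁).choose l₁ : ℕ) : ℂ) * (z * (starRingEnd ℂ) z) ^ l₁ := by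
  set n := 2 * l₁ with hn
  have key : ∀ u : ℝ, (Complex.cos u - 1) *
      (Complex.exp (Complex.I * u) * z
        + Complex.exp (-(Complex.I * u)) * (starRingEnd ℂ) z) ^ n
      = ∑ k ∈ Finset.range (n + 1),
          (z ^ k * ((starRingEnd ℂ) z) ^ (n - k) * ((n.choose k : ℕ) : ℂ)) *
            ((Complex.cos u - 1) *
              Complex.exp ((Int.cast (2 * (k : ℤ) - (n : ℤ)) : ℂ) * (Complex.I * u))) := by
    intro u
    rw [add_pow, Finset.mul_sum]
    apply Finset.sum_congr rfl
    intro k hk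
    have hkn : k ≤ n := Nat.lt_succ_iff.mp (Finset.mem_range.mp hk)
    have he : Complex.exp (Complex.I * u) ^ k * Complex.exp (-(Complex.I * u)) ^ (n - k)
        = Complex.exp ((Int.cast (2 * (k : ℤ) - (n : ℤ)) : ℂ) * (Complex.I * u)) := by
      rw [← Complex.exp_nat_mul, ← Complex.exp_nat_mul, ← Complex.exp_add]
      congr 1
      push_cast [Nat.cast_sub hkn]
      ring
    linear_combination ((Complex.cos u - 1) * z ^ k * ((starRingEnd ℂ) z) ^ (n - k) *
      ((n.choose k : ℕ) : ℂ)) * he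
  simp_rw [key]
  rw [intervalIntegral.integral_finset_sum]
  · have heach : ∀ k ∈ Finset.range (n + 1),
        (∫ u in (0:ℝ)..(2 * Real.pi),
          (z ^ k * ((starRingEnd ℂ) z) ^ (n - k) * ((n.choose k : ℕ) : ℂ)) *
            ((Complex.cos u - 1) *
              Complex.exp ((Int.cast (2 * (k : ℤ) - (n : ℤ)) : ℂ) * (Complex.I * u))))
        = (z ^ k * ((starRingEnd ℂ) z) ^ (n - k) * ((n.choose k : ℕ) : ℂ)) *
            (if (2 * (k : ℤ) - (n : ℤ)) = 0 then (-(2 * Real.pi) : ℂ) else 0) := by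
      intro k _
      rw [intervalIntegral.integral_const_mul, cosInt (2 * (k : ℤ) - (n : ℤ))
        (by omega) (by omega)]
    rw [Finset.sum_congr rfl heach]
    rw [Finset.sum_eq_single l₁]
    · rw [if_pos (by omega), show n - l₁ = l₁ by omega]
      ring
    · intro k _ hk
      rw [if_neg (by omega), mul_zero]
    · intro h
      exact absurd (Finset.mem_range.mpr (by omega)) h
  · intro k _
    apply Continuous.intervalIntegrable
    fun_prop

lemma realAng (l₁ : ℕ) (z : ℂ) :
    (∫ u in (0:ℝ)..(2 * Real.pi),
        (Real.cos u - 1) * (2 * (Complex.exp (Complex.I * u) * z).re) ^ (2 * l₁))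
      = -(2 * Real.pi) * (((2 * l₁).choose l₁ : ℕ) : ℝ) * (‖z‖) ^ (2 * l₁) := by
  apply Complex.ofReal_injective
  rw [← intervalIntegral.integral_ofReal]
  have hpt : ∀ u : ℝ,
      (((Real.cos u - 1) * (2 * (Complex.exp (Complex.I * u) * z).re) ^ (2 * l₁) : ℝ) : ℂ)
        = (Complex.cos u - 1) *
            (Complex.exp (Complex.I * u) * z
              + Complex.exp (-(Complex.I * u)) * (starRingEnd ℂ) z) ^ (2 * l₁) := by
    intro u
    rw [hreal]
    push_cast [Complex.ofReal_cos]
    ring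
  rw [intervalIntegral.integral_congr (fun u _ => hpt u), angInt]
  rw [Complex.mul_conj]
  rw [show (Complex.normSq z : ℂ) = ((‖z‖ ^ 2 : ℝ) : ℂ) by
    rw [Complex.sq_norm]]
  push_cast
  rw [← pow_mul]

lemma gaussMoment (μ : ℝ) (hμ : 0 < μ) (l₁ : ℕ) :
    (∫ z : ℂ, (‖z‖) ^ (2 * l₁) * Real.exp (-μ * ‖z‖ ^ 2))
      = Real.pi * (l₁.factorial : ℝ) / μ ^ (l₁ + 1) := by
  have hq : (-2 : ℝ) < (2 * l₁ : ℝ) := by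
    have : (0:ℝ) ≤ (l₁ : ℝ) := Nat.cast_nonneg _
    linarith
  have h := Complex.integral_rpow_mul_exp_neg_mul_rpow (p := 2) (q := (2 * l₁ : ℝ))
    (by norm_num) hq hμ
  have hpt : ∀ z : ℂ, ‖z‖ ^ ((2 * l₁ : ℝ)) * Real.exp (-μ * ‖z‖ ^ (2:ℝ))
      = (‖z‖) ^ (2 * l₁) * Real.exp (-μ * ‖z‖ ^ 2) := by
    intro z
    rw [show ((2 * l₁ : ℝ)) = ((2 * l₁ : ℕ) : ℝ) by push_cast; ring, Real.rpow_natCast,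
      show ((2:ℝ)) = ((2:ℕ):ℝ) by norm_num, Real.rpow_natCast]
  rw [MeasureTheory.integral_congr_ae (Filter.Eventually.of_forall hpt)] at h
  rw [h]
  rw [show (-((2 * l₁ : ℝ) + 2) / 2) = -(((l₁ + 1 : ℕ) : ℝ)) by push_cast; ring,
    Real.rpow_neg hμ.le, Real.rpow_natCast,
    show (((2 * l₁ : ℝ)) + 2) / 2 = ((l₁ : ℝ) + 1) by push_cast; ring,
    Real.Gamma_nat_eq_factorial]
  field_simp

lemma innerDouble (l₁ : ℕ) (z : ℂ) :
    (∫ u in (0:ℝ)..(2 * Real.pi), ∫ s in (0:ℝ)..u,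
        PB (fun w => Complex.exp (Complex.I * s) * w
              + Complex.exp (-(Complex.I * s)) * (starRingEnd ℂ) w)
           (fun w => (Complex.exp (Complex.I * u) * w
              + Complex.exp (-(Complex.I * u)) * (starRingEnd ℂ) w) ^ (2 * l₁ + 1)) z)
      = (-(2 * Real.pi) * ((2 * l₁ + 1 : ℝ) * (((2 * l₁).choose l₁ : ℕ) : ℝ)))
          * (‖z‖) ^ (2 * l₁) := by
  have hinner : ∀ u : ℝ,
      (∫ s in (0:ℝ)..u,
        PB (fun w => Complex.exp (Complex.I * s) * w
              + Complex.exp (-(Complex.I * s)) * (starRingEnd ℂ) w)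
           (fun w => (Complex.exp (Complex.I * u) * w
              + Complex.exp (-(Complex.I * u)) * (starRingEnd ℂ) w) ^ (2 * l₁ + 1)) z)
      = (2 * l₁ + 1 : ℝ) *
          ((Real.cos u - 1) * (2 * (Complex.exp (Complex.I * u) * z).re) ^ (2 * l₁)) := by
    intro u
    rw [intervalIntegral.integral_congr (fun s _ => PB_eval l₁ s u z),
      intervalIntegral.integral_const_mul]
    have : (∫ s in (0:ℝ)..u, Real.sin (s - u)) = Real.cos u - 1 := by
      rw [intervalIntegral.integral_comp_sub_right (fun t => Real.sin t) u]
      simp [integral_sin]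
    rw [this]
    ring
  rw [intervalIntegral.integral_congr (fun u _ => hinner u),
    intervalIntegral.integral_const_mul, realAng]
  ring


/-- For `μ > 0` and `l = 2l₁ + 1` odd,
`∫_ℂ e^{-μ|z|²} ∫₀^{2π} ∫₀^u {e^{is}z + e^{-is}z̄, (e^{iu}z + e^{-iu}z̄)^l} ds du dz dz̄
  = -2π² l! / (l₁! μ^{l₁+1})`. -/
theorem odd_potential_bracket_integral (μ : ℝ) (hμ : 0 < μ) (l₁ : ℕ) :
    (∫ z : ℂ, Real.exp (-μ * ‖z‖ ^ 2) *
      ∫ u in (0:ℝ)..(2 * Real.pi), ∫ s in (0:ℝ)..u,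
        PB (fun w => Complex.exp (Complex.I * s) * w
              + Complex.exp (-(Complex.I * s)) * (starRingEnd ℂ) w)
           (fun w => (Complex.exp (Complex.I * u) * w
              + Complex.exp (-(Complex.I * u)) * (starRingEnd ℂ) w) ^ (2 * l₁ + 1)) z)
      = -(2 * Real.pi ^ 2 * ((2 * l₁ + 1).factorial : ℝ))
          / ((l₁.factorial : ℝ) * μ ^ (l₁ + 1)) := by
  set c : ℝ := -(2 * Real.pi) * ((2 * l₁ + 1 : ℝ) * (((2 * l₁).choose l₁ : ℕ) : ℝ)) with hc
  have hpt : ∀ z : ℂ, Real.exp (-μ * ‖z‖ ^ 2) *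
      (∫ u in (0:ℝ)..(2 * Real.pi), ∫ s in (0:ℝ)..u,
        PB (fun w => Complex.exp (Complex.I * s) * w
              + Complex.exp (-(Complex.I * s)) * (starRingEnd ℂ) w)
           (fun w => (Complex.exp (Complex.I * u) * w
              + Complex.exp (-(Complex.I * u)) * (starRingEnd ℂ) w) ^ (2 * l₁ + 1)) z)
      = c * ((‖z‖) ^ (2 * l₁) * Real.exp (-μ * ‖z‖ ^ 2)) := by
    intro z
    rw [innerDouble l₁ z, ← hc]
    ring
  rw [MeasureTheory.integral_congr_ae (Filter.Eventually.of_forall hpt),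
    MeasureTheory.integral_const_mul, gaussMoment μ hμ l₁]
  have hfact : ((2 * l₁ + 1) * ((2 * l₁).choose l₁) * l₁.factorial * l₁.factorial : ℕ)
      = (2 * l₁ + 1).factorial := by
    have h := Nat.choose_mul_factorial_mul_factorial (show l₁ ≤ 2 * l₁ by omega)
    rw [show 2 * l₁ - l₁ = l₁ by omega] at h
    rw [Nat.factorial_succ, ← h]
    ring
  have hfactR : ((2 * l₁ + 1 : ℝ)) * (((2 * l₁).choose l₁ : ℕ) : ℝ) * (l₁.factorial : ℝ)
      * (l₁.factorial : ℝ) = ((2 * l₁ + 1).factorial : ℝ) := by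
    rw [← hfact]
    push_cast
    ring
  have hμne : μ ^ (l₁ + 1) ≠ 0 := pow_ne_zero _ hμ.ne'
  have hfne : (l₁.factorial : ℝ) ≠ 0 := Nat.cast_ne_zero.mpr l₁.factorial_ne_zero
  rw [hc]
  field_simp
  linear_combination (-1 : ℝ) * hfactR
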